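/- Let (t, ε) be a signed Schröder tree and σ = perm(t, ε). For any two leaves i < j (in the canonical left-to-right order), σ_i < σ_j if and only if the common ancestor of leaves i and j in t has sign +. -/
import Mathlib


/-- Signed plane trees: a leaf, or an internal vertex carrying a sign
(`true` = `+`, `false` = `-`) with an ordered list of subtrees. -/
inductive STree where
  | leaf : STree
  | node : Bool → List STree → STree

/-- Number of leaves. -/
def STree.nleaves : STree → ℕ
  | .leaf => 1
  | .node _ cs => (cs.attach.map (fun c => STree.nleaves c.1)).sum
decreasing_by simp_wf; have := List.sizeOf_lt_of_mem c.2; omega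

/-- Direct sum of two permutations in one-line notation. -/
def oplus (a b : List ℕ) : List ℕ := a ++ b.map (· + a.length)

/-- Skew sum of two permutations in one-line notation. -/
def ominus (a b : List ℕ) : List ℕ := a.map (· + b.length) ++ b

/-- The permutation (in one-line notation, values `1,…,n`) associated with a signed tree:
a leaf gives `[1]`; a `+`-signed vertex gives the direct sum of its children's permutations,
a `-`-signed vertex their skew sum. -/
def STree.permOf : STree → List ℕ
  | .leaf => [1]
  | .node s cs => (cs.attach.map (fun c => STree.permOf c.1)).foldr
      (if s then oplus else ominus) []
decreasing_by simp_wf; have := List.sizeOf_lt_of_mem c.2; omega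

mutual
/-- The sign of the first common ancestor in `t` of the leaves with (0-indexed,
left-to-right) labels `i < j`. -/
def STree.caSign : STree → ℕ → ℕ → Bool
  | .leaf, _, _ => true
  | .node s cs, i, j => STree.caSignList s cs i j

/-- Helper for `STree.caSign`, scanning the list of children of a vertex of sign `s`. -/
def STree.caSignList : Bool → List STree → ℕ → ℕ → Bool
  | s, [], _, _ => s
  | s, c :: rest, i, j =>
      if j < c.nleaves then STree.caSign c i j
      else if i < c.nleaves then s
      else STree.caSignList s rest (i - c.nleaves) (j - c.nleaves)
end


/-! ### Auxiliary lemmas -/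

lemma attach_map_perm (cs : List STree) :
    cs.attach.map (fun c => STree.permOf c.1) = cs.map STree.permOf := by
  simp

lemma attach_map_nleaves (cs : List STree) :
    cs.attach.map (fun c => STree.nleaves c.1) = cs.map STree.nleaves := by
  simp

def foldPerm (s : Bool) (cs : List STree) : List ℕ :=
  (cs.map STree.permOf).foldr (if s then oplus else ominus) []

lemma permOf_node (s : Bool) (cs : List STree) :
    STree.permOf (.node s cs) = foldPerm s cs := by
  rw [STree.permOf, foldPerm, attach_map_perm]

lemma nleaves_node (s : Bool) (cs : List STree) :
    STree.nleaves (.node s cs) = (cs.map STree.nleaves).sum := by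
  rw [STree.nleaves, attach_map_nleaves]

lemma foldPerm_cons (s : Bool) (c : STree) (rest : List STree) :
    foldPerm s (c :: rest) = (if s then oplus else ominus) c.permOf (foldPerm s rest) := by
  simp [foldPerm]

lemma oplus_length (a b : List ℕ) : (oplus a b).length = a.length + b.length := by
  simp [oplus]

lemma ominus_length (a b : List ℕ) : (ominus a b).length = a.length + b.length := by
  simp [ominus]

lemma getD_map_add (a : List ℕ) (c k : ℕ) (hk : k < a.length) :
    (a.map (· + c)).getD k 0 = a.getD k 0 + c := by
  rw [List.getD_eq_getElem _ _ (by simpa using hk), List.getD_eq_getElem _ _ hk]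
  simp

lemma oplus_getD_left (a b : List ℕ) (k : ℕ) (hk : k < a.length) :
    (oplus a b).getD k 0 = a.getD k 0 := by
  rw [oplus, List.getD_append _ _ _ _ hk]

lemma oplus_getD_right (a b : List ℕ) (k : ℕ) (hk1 : a.length ≤ k) (hk2 : k < a.length + b.length) :
    (oplus a b).getD k 0 = b.getD (k - a.length) 0 + a.length := by
  rw [oplus, List.getD_append_right _ _ _ _ hk1, getD_map_add _ _ _ (by omega)]

lemma ominus_getD_left (a b : List ℕ) (k : ℕ) (hk : k < a.length) :
    (ominus a b).getD k 0 = a.getD k 0 + b.length := by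
  rw [ominus, List.getD_append _ _ _ _ (by simpa using hk), getD_map_add _ _ _ hk]

lemma ominus_getD_right (a b : List ℕ) (k : ℕ) (hk1 : a.length ≤ k) :
    (ominus a b).getD k 0 = b.getD (k - a.length) 0 := by
  rw [ominus, List.getD_append_right _ _ _ _ (by simpa using hk1)]
  simp

mutual
theorem permOf_length : ∀ (t : STree), t.permOf.length = t.nleaves
  | .leaf => by simp [STree.permOf, STree.nleaves]
  | .node s cs => by
      rw [permOf_node, nleaves_node]
      exact foldPerm_length s cs
termination_by t => sizeOf t
decreasing_by all_goals (simp_wf; try omega)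

theorem foldPerm_length : ∀ (s : Bool) (cs : List STree),
    (foldPerm s cs).length = (cs.map STree.nleaves).sum
  | s, [] => by cases s <;> simp [foldPerm]
  | s, c :: rest => by
      have h1 := permOf_length c
      have h2 := foldPerm_length s rest
      rw [foldPerm_cons]
      cases s <;> simp [oplus_length, ominus_length, h1, h2] <;> omega
termination_by s cs => sizeOf cs
decreasing_by all_goals (simp_wf; try omega)
end

mutual
theorem permOf_bounds : ∀ (t : STree) (k : ℕ), k < t.nleaves →
    1 ≤ t.permOf.getD k 0 ∧ t.permOf.getD k 0 ≤ t.nleaves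
  | .leaf, k, hk => by
      have hk0 : k = 0 := by simp [STree.nleaves] at hk; omega
      subst hk0; simp [STree.permOf, STree.nleaves]
  | .node s cs, k, hk => by
      rw [permOf_node, nleaves_node]
      rw [nleaves_node] at hk
      exact foldPerm_bounds s cs k hk
termination_by t k hk => sizeOf t
decreasing_by all_goals (simp_wf; try omega)

theorem foldPerm_bounds : ∀ (s : Bool) (cs : List STree) (k : ℕ),
    k < (cs.map STree.nleaves).sum →
    1 ≤ (foldPerm s cs).getD k 0 ∧ (foldPerm s cs).getD k 0 ≤ (cs.map STree.nleaves).sum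
  | s, [], k, hk => by simp at hk
  | s, c :: rest, k, hk => by
      have ha := permOf_length c
      have hb := foldPerm_length s rest
      have hsum : (List.map STree.nleaves (c :: rest)).sum
          = c.nleaves + (rest.map STree.nleaves).sum := by simp
      rw [foldPerm_cons]
      rw [hsum] at hk ⊢
      by_cases h1 : k < c.nleaves
      · have hbd := permOf_bounds c k h1
        cases s
        · rw [if_neg (by simp), ominus_getD_left _ _ _ (by omega)]; omega
        · rw [if_pos rfl, oplus_getD_left _ _ _ (by omega)]; omega
      · have hbd := foldPerm_bounds s rest (k - c.nleaves) (by omega)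
        cases s
        · rw [if_neg (by simp), ominus_getD_right _ _ _ (by omega)]
          rw [ha]; omega
        · rw [if_pos rfl, oplus_getD_right _ _ _ (by omega) (by omega)]
          rw [ha]; omega
termination_by s cs k hk => sizeOf cs
decreasing_by all_goals (simp_wf; try omega)
end

mutual
theorem main_tree : ∀ (t : STree) (i j : ℕ), i < j → j < t.nleaves →
    (t.permOf.getD i 0 < t.permOf.getD j 0 ↔ t.caSign i j = true)
  | .leaf, i, j, hij, hj => by simp [STree.nleaves] at hj; omega
  | .node s cs, i, j, hij, hj => by
      rw [permOf_node, STree.caSign]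
      rw [nleaves_node] at hj
      exact main_list s cs i j hij hj
termination_by t i j hij hj => sizeOf t
decreasing_by all_goals (simp_wf; try omega)

theorem main_list : ∀ (s : Bool) (cs : List STree) (i j : ℕ), i < j →
    j < (cs.map STree.nleaves).sum →
    ((foldPerm s cs).getD i 0 < (foldPerm s cs).getD j 0 ↔ STree.caSignList s cs i j = true)
  | s, [], i, j, hij, hj => by simp at hj
  | s, c :: rest, i, j, hij, hj => by
      have ha := permOf_length c
      have hb := foldPerm_length s rest
      have hsum : (List.map STree.nleaves (c :: rest)).sum
          = c.nleaves + (rest.map STree.nleaves).sum := by simp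
      rw [hsum] at hj
      rw [foldPerm_cons, STree.caSignList]
      by_cases h1 : j < c.nleaves
      · rw [if_pos h1]
        have hrec := main_tree c i j hij h1
        cases s
        · rw [if_neg (by simp), ominus_getD_left _ _ _ (by omega),
            ominus_getD_left _ _ _ (by omega)]
          rw [Nat.add_lt_add_iff_right]
          exact hrec
        · rw [if_pos rfl, oplus_getD_left _ _ _ (by omega),
            oplus_getD_left _ _ _ (by omega)]
          exact hrec
      · rw [if_neg h1]
        by_cases h2 : i < c.nleaves
        · rw [if_pos h2]
          have hbi := permOf_bounds c i h2
          have hbj := foldPerm_bounds s rest (j - c.nleaves) (by omega)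
          cases s
          · rw [if_neg (by simp), ominus_getD_left _ _ _ (by omega),
              ominus_getD_right _ _ _ (by omega)]
            simp only [Bool.false_eq_true, iff_false, not_lt]
            rw [ha]; omega
          · rw [if_pos rfl, oplus_getD_left _ _ _ (by omega),
              oplus_getD_right _ _ _ (by omega) (by omega)]
            simp only [iff_true]
            rw [ha]; omega
        · rw [if_neg h2]
          have hrec := main_list s rest (i - c.nleaves) (j - c.nleaves) (by omega) (by omega)
          cases s
          · rw [if_neg (by simp), ominus_getD_right _ _ _ (by omega),
              ominus_getD_right _ _ _ (by omega)]
            rw [ha]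
            simpa using hrec
          · rw [if_pos rfl, oplus_getD_right _ _ _ (by omega) (by omega),
              oplus_getD_right _ _ _ (by omega) (by omega)]
            rw [ha]
            simp only [Nat.add_lt_add_iff_right]
            simpa using hrec
termination_by s cs i j hij hj => sizeOf cs
decreasing_by all_goals (simp_wf; try omega)
end

/-- Let `(t, ε)` be a signed Schröder tree and `σ = perm(t, ε)`. For any two leaves
`i < j` (canonical left-to-right, 0-indexed), `σ_i < σ_j` iff the common ancestor of
leaves `i` and `j` has sign `+`. -/
theorem perm_lt_iff_commonAncestor_plus (t : STree) (i j : ℕ)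
    (hij : i < j) (hj : j < t.nleaves) :
    t.permOf.getD i 0 < t.permOf.getD j 0 ↔ t.caSign i j = true := by
  exact main_tree t i j hij hj
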